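/- arXiv:1109.2879 — 3 statements merged into one kernel-verified Lean document; each statement's English description precedes it below -/
import Mathlib

section
/- Let N be a lattice and let A₁, A₂ be subgroups of its isometry group O(N), and let A = ⟨A₁, A₂⟩ be the subgroup generated by A₁ and A₂. Then the coinvariant sublattice N_A equals the primitive closure [N_{A₁} + N_{A₂}]_pr of the sublattice generated by the coinvariant sublattices N_{A₁} and N_{A₂}. -/
/-!
STATEMENT 8 (the coinvariant sublattice of a subgroup generated by two subgroups).

A lattice is formalized as a finitely generated free `ℤ`-module `M` together with a
nondegenerate symmetric bilinear form `B : M →ₗ[ℤ] M →ₗ[ℤ] ℤ`.  Isometries are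
`ℤ`-linear automorphisms `g : M ≃ₗ[ℤ] M` preserving `B`; subgroups of the isometry
group `O(N)` are subgroups of the automorphism group `M ≃ₗ[ℤ] M` all of whose elements
preserve `B`.
-/

/-- The invariant sublattice `N^A = {x ∈ N : g x = x for all g ∈ A}`. -/
def invariants {M : Type} [AddCommGroup M]
    (A : Subgroup (M ≃ₗ[ℤ] M)) : Submodule ℤ M where
  carrier := {x | ∀ g ∈ A, g x = x}
  add_mem' := by
    intro a b ha hb g hg
    rw [map_add, ha g hg, hb g hg]
  zero_mem' := by
    intro g hg
    simp
  smul_mem' := by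
    intro c x hx g hg
    rw [map_smul, hx g hg]

/-- The coinvariant sublattice `N_A = (N^A)^⊥ = {x ∈ N : B(x, v) = 0 for all v ∈ N^A}`. -/
def coinvariants {M : Type} [AddCommGroup M]
    (B : M →ₗ[ℤ] M →ₗ[ℤ] ℤ) (A : Subgroup (M ≃ₗ[ℤ] M)) : Submodule ℤ M where
  carrier := {x | ∀ v ∈ invariants A, B x v = 0}
  add_mem' := by
    intro a b ha hb v hv
    rw [map_add, LinearMap.add_apply, ha v hv, hb v hv, add_zero]
  zero_mem' := by
    intro v hv
    simp
  smul_mem' := by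
    intro c x hx v hv
    rw [map_smul, LinearMap.smul_apply, hx v hv, smul_zero]

/-- The primitive closure `[K]_pr = {x ∈ N : n·x ∈ K for some nonzero n ∈ ℤ}` of a
sublattice `K ⊆ N`. -/
def primClosure {M : Type} [AddCommGroup M] (K : Submodule ℤ M) : Submodule ℤ M where
  carrier := {x | ∃ k : ℤ, k ≠ 0 ∧ k • x ∈ K}
  add_mem' := by
    rintro a b ⟨k, hk, hka⟩ ⟨l, hl, hlb⟩
    refine ⟨k * l, mul_ne_zero hk hl, ?_⟩
    rw [smul_add]
    exact K.add_mem (by rw [mul_comm, mul_smul]; exact K.smul_mem l hka)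
      (by rw [mul_smul]; exact K.smul_mem k hlb)
  zero_mem' := ⟨1, one_ne_zero, by simp⟩
  smul_mem' := by
    rintro c x ⟨k, hk, hkx⟩
    exact ⟨k, hk, by rw [smul_comm]; exact K.smul_mem c hkx⟩

set_option linter.unusedSectionVars false

section Aux

open Module

variable {M : Type} [AddCommGroup M] {ι : Type} [Fintype ι] [DecidableEq ι]

/-- Embedding of a free ℤ-module into ι → ℚ via a basis. -/
noncomputable def embQ (b : Basis ι ℤ M) : M →ₗ[ℤ] (ι → ℚ) where
  toFun x i := ((b.repr x) i : ℚ)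
  map_add' x y := by funext i; simp
  map_smul' c x := by funext i; push_cast [map_smul]; simp [zsmul_eq_mul]

lemma embQ_apply (b : Basis ι ℤ M) (x : M) (i : ι) : embQ b x i = ((b.repr x) i : ℚ) := rfl

lemma embQ_injective (b : Basis ι ℤ M) : Function.Injective (embQ b) := by
  intro x y h
  apply b.repr.injective
  ext i
  have := congrFun h i
  simpa [embQ_apply] using this

lemma rat_den_smul (q : ℚ) {n : ℤ} (h : (q.den : ℤ) ∣ n) : ∃ m : ℤ, (m : ℚ) = n • q := by
  obtain ⟨k, hk⟩ := h
  refine ⟨k * q.num, ?_⟩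
  have hd0 : (q.den : ℚ) ≠ 0 := by exact_mod_cast q.den_nz
  have hden : (q.num : ℚ) = q * q.den := (div_eq_iff hd0).mp (Rat.num_div_den q)
  rw [hk, zsmul_eq_mul]
  push_cast
  rw [hden]
  ring

lemma exists_int_vec (v : ι → ℚ) : ∃ n : ℤ, n ≠ 0 ∧ ∃ c : ι → ℤ, (fun i => ((c i : ℚ))) = n • v := by
  classical
  set n : ℤ := ∏ i, ((v i).den : ℤ) with hn
  have hne : n ≠ 0 := Finset.prod_ne_zero_iff.mpr fun i _ => by
    exact_mod_cast (v i).den_nz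
  have hdvd : ∀ i, ((v i).den : ℤ) ∣ n := fun i => Finset.dvd_prod_of_mem _ (Finset.mem_univ i)
  choose c hc using fun i => rat_den_smul (v i) (hdvd i)
  exact ⟨n, hne, c, by funext i; rw [hc i]; simp⟩

lemma exists_int_smul_embQ (b : Basis ι ℤ M) (v : ι → ℚ) :
    ∃ n : ℤ, n ≠ 0 ∧ ∃ x : M, embQ b x = n • v := by
  obtain ⟨n, hn, c, hc⟩ := exists_int_vec v
  refine ⟨n, hn, b.repr.symm (Finsupp.equivFunOnFinite.symm c), ?_⟩
  funext i
  rw [embQ_apply]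
  simp only [LinearEquiv.apply_symm_apply]
  rw [← hc]
  simp

lemma span_embQ_char (b : Basis ι ℤ M) (K : Submodule ℤ M) {v : ι → ℚ}
    (hv : v ∈ Submodule.span ℚ (embQ b '' (K : Set M))) :
    ∃ n : ℤ, n ≠ 0 ∧ ∃ k ∈ K, embQ b k = n • v := by
  induction hv using Submodule.span_induction with
  | mem w hw =>
      obtain ⟨k, hk, rfl⟩ := hw
      exact ⟨1, one_ne_zero, k, hk, (one_smul _ _).symm⟩
  | zero => exact ⟨1, one_ne_zero, 0, K.zero_mem, by simp⟩
  | add u w _ _ hu hw =>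
      obtain ⟨n, hn, k, hk, hek⟩ := hu
      obtain ⟨m, hm, l, hl, hel⟩ := hw
      refine ⟨n * m, mul_ne_zero hn hm, m • k + n • l,
        K.add_mem (K.smul_mem _ hk) (K.smul_mem _ hl), ?_⟩
      rw [map_add, map_smul, map_smul, hek, hel, smul_add, smul_smul, smul_smul,
        mul_comm m n]
  | smul q u _ hu =>
      obtain ⟨n, hn, k, hk, hek⟩ := hu
      have hd0 : (q.den : ℚ) ≠ 0 := by exact_mod_cast q.den_nz
      have hdz : ((q.den : ℤ)) ≠ 0 := by exact_mod_cast q.den_nz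
      have hden : (q.num : ℚ) = q * q.den := (div_eq_iff hd0).mp (Rat.num_div_den q)
      refine ⟨(q.den : ℤ) * n, mul_ne_zero hdz hn, q.num • k, K.smul_mem _ hk, ?_⟩
      rw [map_smul, hek, smul_smul, ← Int.cast_smul_eq_zsmul ℚ,
        ← Int.cast_smul_eq_zsmul ℚ ((q.den : ℤ) * n), smul_smul]
      congr 1
      push_cast
      rw [hden]
      ring

/-- The bilinear form on `ι → ℚ` with the same Gram matrix. -/
noncomputable def BQ (b : Basis ι ℤ M) (B : M →ₗ[ℤ] M →ₗ[ℤ] ℤ) :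
    (ι → ℚ) →ₗ[ℚ] (ι → ℚ) →ₗ[ℚ] ℚ :=
  Matrix.toLinearMap₂' ℚ (Matrix.of fun i j => ((B (b i) (b j) : ℤ) : ℚ))

lemma BQ_embQ (b : Basis ι ℤ M) (B : M →ₗ[ℤ] M →ₗ[ℤ] ℤ) (x y : M) :
    BQ b B (embQ b x) (embQ b y) = ((B x y : ℤ) : ℚ) := by
  rw [BQ, Matrix.toLinearMap₂'_apply]
  conv_rhs => rw [← b.sum_repr x, ← b.sum_repr y]
  simp only [map_sum, map_smul, LinearMap.coe_sum, Finset.sum_apply,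
    LinearMap.smul_apply, smul_eq_mul, embQ_apply, Matrix.of_apply]
  push_cast
  rw [Finset.sum_comm]
  refine Finset.sum_congr rfl fun i _ => ?_
  rw [Finset.mul_sum]
  refine Finset.sum_congr rfl fun j _ => ?_
  ring

end Aux

/-- Let `N` be a lattice, `A₁, A₂ ≤ O(N)`, and `A = ⟨A₁, A₂⟩`.
Then `N_A = [N_{A₁} + N_{A₂}]_pr`. -/
theorem statement8 {M : Type} [AddCommGroup M]
    [Module.Free ℤ M] [Module.Finite ℤ M]
    (B : M →ₗ[ℤ] M →ₗ[ℤ] ℤ)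
    (hBsymm : ∀ x y, B x y = B y x) (hBnd : ∀ x, (∀ y, B x y = 0) → x = 0)
    (A₁ A₂ : Subgroup (M ≃ₗ[ℤ] M))
    (hA₁ : ∀ a ∈ A₁, ∀ x y, B (a x) (a y) = B x y)
    (hA₂ : ∀ a ∈ A₂, ∀ x y, B (a x) (a y) = B x y) :
    coinvariants B (A₁ ⊔ A₂) = primClosure (coinvariants B A₁ ⊔ coinvariants B A₂) := by
  classical
  -- invariants of the sup
  have hle1 : invariants (A₁ ⊔ A₂) ≤ invariants A₁ :=
    fun v hv g hg => hv g ((le_sup_left : A₁ ≤ A₁ ⊔ A₂) hg)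
  have hle2 : invariants (A₁ ⊔ A₂) ≤ invariants A₂ :=
    fun v hv g hg => hv g ((le_sup_right : A₂ ≤ A₁ ⊔ A₂) hg)
  have hinf : ∀ v : M, v ∈ invariants A₁ → v ∈ invariants A₂ → v ∈ invariants (A₁ ⊔ A₂) := by
    intro v h1 h2 g hg
    have hstab : A₁ ⊔ A₂ ≤ MulAction.stabilizer (M ≃ₗ[ℤ] M) v := by
      refine sup_le (fun a ha => ?_) (fun a ha => ?_)
      · simpa [MulAction.mem_stabilizer_iff, LinearEquiv.smul_def] using h1 a ha
      · simpa [MulAction.mem_stabilizer_iff, LinearEquiv.smul_def] using h2 a ha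
    simpa [MulAction.mem_stabilizer_iff, LinearEquiv.smul_def] using hstab hg
  -- set up the rational picture
  set ι := Module.Free.ChooseBasisIndex ℤ M with hι
  letI : Fintype ι := inferInstance
  letI : DecidableEq ι := Classical.decEq ι
  set b : Module.Basis ι ℤ M := Module.Free.chooseBasis ℤ M with hb
  set f : M →ₗ[ℤ] (ι → ℚ) := embQ b with hf
  set Bq : (ι → ℚ) →ₗ[ℚ] (ι → ℚ) →ₗ[ℚ] ℚ := BQ b B with hBq
  have hker : ∀ v : ι → ℚ, Bq v = 0 → v = 0 := by
    intro v hv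
    obtain ⟨n, hn, x, hx⟩ := exists_int_smul_embQ b v
    have hx0 : x = 0 := by
      apply hBnd
      intro y
      have h0 : ((B x y : ℤ) : ℚ) = 0 := by
        rw [← BQ_embQ b B x y, ← hf, ← hBq, hx, map_zsmul, hv]
        simp
      exact_mod_cast h0
    rw [hx0, map_zero] at hx
    have := (smul_eq_zero.mp hx.symm).resolve_left hn
    exact this
  have hinj : Function.Injective Bq := by
    intro v w h
    have h0 : Bq (v - w) = 0 := by rw [map_sub, h, sub_self]
    exact sub_eq_zero.mp (hker _ h0)
  have hdim : Module.finrank ℚ (ι → ℚ) = Module.finrank ℚ (Module.Dual ℚ (ι → ℚ)) :=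
    Subspace.dual_finrank_eq.symm
  set e : (ι → ℚ) ≃ₗ[ℚ] Module.Dual ℚ (ι → ℚ) :=
    LinearMap.linearEquivOfInjective Bq hinj hdim with he
  have hcomap : ∀ S : Submodule ℚ (Module.Dual ℚ (ι → ℚ)),
      Submodule.comap Bq S = Submodule.map (e.symm : Module.Dual ℚ (ι → ℚ) →ₗ[ℚ] (ι → ℚ)) S := by
    intro S
    have h1 : Submodule.comap Bq S = Submodule.comap (e : (ι → ℚ) →ₗ[ℚ] Module.Dual ℚ (ι → ℚ)) S := rfl
    rw [h1, Submodule.comap_equiv_eq_map_symm]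
  set U₁ : Submodule ℚ (ι → ℚ) := Submodule.span ℚ (f '' (invariants A₁ : Set M)) with hU₁
  set U₂ : Submodule ℚ (ι → ℚ) := Submodule.span ℚ (f '' (invariants A₂ : Set M)) with hU₂
  have key : Submodule.comap Bq ((U₁ ⊓ U₂).dualAnnihilator)
      = Submodule.comap Bq U₁.dualAnnihilator ⊔ Submodule.comap Bq U₂.dualAnnihilator := by
    rw [Subspace.dualAnnihilator_inf_eq, hcomap, hcomap, hcomap, Submodule.map_sup]
  ext x
  constructor
  · -- hard direction
    intro hx
    have hx' : ∀ v ∈ invariants (A₁ ⊔ A₂), B x v = 0 := hx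
    have hmem : f x ∈ Submodule.comap Bq ((U₁ ⊓ U₂).dualAnnihilator) := by
      rw [Submodule.mem_comap, Submodule.mem_dualAnnihilator]
      intro u hu
      obtain ⟨hu1, hu2⟩ := Submodule.mem_inf.mp hu
      obtain ⟨n₁, hn₁, k₁, hk₁, hek₁⟩ := span_embQ_char b (invariants A₁) hu1
      obtain ⟨n₂, hn₂, k₂, hk₂, hek₂⟩ := span_embQ_char b (invariants A₂) hu2
      have heq : n₂ • k₁ = n₁ • k₂ := by
        apply embQ_injective b
        rw [map_zsmul, map_zsmul, hek₁, hek₂, smul_comm]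
      have hw1 : n₂ • k₁ ∈ invariants A₁ := (invariants A₁).smul_mem _ hk₁
      have hw2 : n₂ • k₁ ∈ invariants A₂ := heq ▸ (invariants A₂).smul_mem _ hk₂
      have hw : n₂ • k₁ ∈ invariants (A₁ ⊔ A₂) := hinf _ hw1 hw2
      have hB0 : B x (n₂ • k₁) = 0 := hx' _ hw
      have h0 : Bq (f x) (f (n₂ • k₁)) = 0 := by
        rw [hf, hBq, BQ_embQ b B, hB0]; simp
      rw [map_zsmul, hek₁] at h0
      have h0' : (n₂ * n₁ : ℤ) • (Bq (f x) u) = 0 := by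
        rw [mul_smul, ← map_zsmul (Bq (f x)) n₁ u, ← map_zsmul (Bq (f x)) n₂]
        exact h0
      exact (smul_eq_zero.mp h0').resolve_left (mul_ne_zero hn₂ hn₁)
    rw [key] at hmem
    obtain ⟨p₁, hp₁, p₂, hp₂, hpsum⟩ := Submodule.mem_sup.mp hmem
    have hp₁' : ∀ u ∈ U₁, Bq p₁ u = 0 := by
      intro u hu
      have := Submodule.mem_comap.mp hp₁
      exact (Submodule.mem_dualAnnihilator _).mp this u hu
    have hp₂' : ∀ u ∈ U₂, Bq p₂ u = 0 := by
      intro u hu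
      have := Submodule.mem_comap.mp hp₂
      exact (Submodule.mem_dualAnnihilator _).mp this u hu
    obtain ⟨n₁, hn₁, y₁, hy₁⟩ := exists_int_smul_embQ b p₁
    obtain ⟨n₂, hn₂, y₂, hy₂⟩ := exists_int_smul_embQ b p₂
    have hy₁' : f y₁ = n₁ • p₁ := hy₁
    have hy₂' : f y₂ = n₂ • p₂ := hy₂
    have hc1 : (n₂ • y₁) ∈ coinvariants B A₁ := by
      intro v hv
      have hfv : f v ∈ U₁ := Submodule.subset_span ⟨v, hv, rfl⟩
      have h0 : ((B (n₂ • y₁) v : ℤ) : ℚ) = 0 := by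
        rw [← BQ_embQ b B, ← hf, ← hBq, map_zsmul, hy₁', map_zsmul, map_zsmul,
          LinearMap.smul_apply, LinearMap.smul_apply, hp₁' _ hfv, smul_zero, smul_zero]
      exact_mod_cast h0
    have hc2 : (n₁ • y₂) ∈ coinvariants B A₂ := by
      intro v hv
      have hfv : f v ∈ U₂ := Submodule.subset_span ⟨v, hv, rfl⟩
      have h0 : ((B (n₁ • y₂) v : ℤ) : ℚ) = 0 := by
        rw [← BQ_embQ b B, ← hf, ← hBq, map_zsmul, hy₂', map_zsmul, map_zsmul,
          LinearMap.smul_apply, LinearMap.smul_apply, hp₂' _ hfv, smul_zero, smul_zero]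
      exact_mod_cast h0
    have hsum : n₂ • y₁ + n₁ • y₂ = (n₁ * n₂) • x := by
      apply embQ_injective b
      rw [map_add, map_zsmul, map_zsmul, map_zsmul, hy₁, hy₂,
        smul_smul, smul_smul, mul_comm n₂ n₁, ← smul_add, hpsum]
    exact ⟨n₁ * n₂, mul_ne_zero hn₁ hn₂, hsum ▸ Submodule.add_mem_sup hc1 hc2⟩
  · -- easy direction
    rintro ⟨k, hk, hkx⟩
    intro v hv
    obtain ⟨y₁, hy₁, y₂, hy₂, hysum⟩ := Submodule.mem_sup.mp hkx
    have h1 : B y₁ v = 0 := hy₁ v (hle1 hv)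
    have h2 : B y₂ v = 0 := hy₂ v (hle2 hv)
    have h0 : B (k • x) v = 0 := by
      rw [← hysum, map_add, LinearMap.add_apply, h1, h2, add_zero]
    rw [map_smul, LinearMap.smul_apply, smul_eq_mul] at h0
    exact (mul_eq_zero.mp h0).resolve_left hk
end

section
/- Let N be a lattice and let A = ⟨g₁, …, gₙ⟩ be the subgroup of the isometry group O(N) generated by isometries g₁, …, gₙ. Then the coinvariant sublattice N_A equals the primitive closure [N_{⟨g₁⟩} + ⋯ + N_{⟨gₙ⟩}]_pr of the sublattice generated by the coinvariant sublattices N_{⟨gᵢ⟩} of the cyclic subgroups ⟨gᵢ⟩. -/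
/-- Let `N` be a lattice and `A = ⟨g₁, …, gₙ⟩ ≤ O(N)` generated by
isometries `g₁, …, gₙ`.  Then `N_A = [N_{⟨g₁⟩} + ⋯ + N_{⟨gₙ⟩}]_pr`. -/
theorem statement9 {M : Type} [AddCommGroup M]
    [Module.Free ℤ M] [Module.Finite ℤ M]
    (B : M →ₗ[ℤ] M →ₗ[ℤ] ℤ)
    (hBsymm : ∀ x y, B x y = B y x) (hBnd : ∀ x, (∀ y, B x y = 0) → x = 0)
    {k : ℕ} (g : Fin k → (M ≃ₗ[ℤ] M))
    (hg : ∀ i, ∀ x y, B (g i x) (g i y) = B x y) :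
    coinvariants B (Subgroup.closure (Set.range g))
      = primClosure (⨆ i, coinvariants B (Subgroup.zpowers (g i))) := by
  classical
  set A : Subgroup (M ≃ₗ[ℤ] M) := Subgroup.closure (Set.range g) with hAdef
  set T : Submodule ℤ M := ⨆ i, coinvariants B (Subgroup.zpowers (g i)) with hTdef
  have hgiA : ∀ i, g i ∈ A := fun i => Subgroup.subset_closure ⟨i, rfl⟩
  have hTle : T ≤ coinvariants B A := by
    refine iSup_le fun i => ?_
    intro x hx v hv
    exact hx v (fun h hh => hv h ((Subgroup.zpowers_le.mpr (hgiA i)) hh))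
  -- the basis and the rationalization map
  let ι := Module.Free.ChooseBasisIndex ℤ M
  let b : Module.Basis ι ℤ M := Module.Free.chooseBasis ℤ M
  let φ : M →ₗ[ℤ] (ι → ℚ) :=
    { toFun := fun x i => ((b.repr x i : ℤ) : ℚ)
      map_add' := by intro x y; funext i; push_cast [map_add]; simp
      map_smul' := by
        intro c x; funext i
        simp only [map_smul, Finsupp.coe_smul, Pi.smul_apply, smul_eq_mul, RingHom.id_apply,
          Int.cast_mul]
        rw [← Int.cast_smul_eq_zsmul ℚ, smul_eq_mul] }
  have hφapp : ∀ (x : M) (i : ι), φ x i = ((b.repr x i : ℤ) : ℚ) := fun _ _ => rfl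
  have hφinj : Function.Injective φ := by
    intro u v huv
    apply b.repr.injective
    ext i
    have := congrFun huv i
    rw [hφapp, hφapp] at this
    exact_mod_cast this
  -- clearing denominators of a vector
  have clear_denom : ∀ v : ι → ℚ, ∃ c : ℤ, c ≠ 0 ∧ ∃ u : M, φ u = (c : ℚ) • v := by
    intro v
    obtain ⟨d, hd⟩ := IsLocalization.exist_integer_multiples (nonZeroDivisors ℤ) Finset.univ v
    choose m hm using fun i => hd i (Finset.mem_univ i)
    refine ⟨(d : ℤ), nonZeroDivisors.coe_ne_zero d, b.repr.symm (Finsupp.equivFunOnFinite.symm m), ?_⟩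
    funext i
    rw [hφapp]
    simp only [LinearEquiv.apply_symm_apply, Finsupp.coe_equivFunOnFinite_symm]
    have h := hm i
    rw [eq_intCast (algebraMap ℤ ℚ) (m i)] at h
    rw [h]
    exact (Int.cast_smul_eq_zsmul ℚ _ _).symm
  -- the rational bilinear form
  let G : Matrix ι ι ℚ := Matrix.of fun i j => ((B (b i) (b j) : ℤ) : ℚ)
  let Bq : LinearMap.BilinForm ℚ (ι → ℚ) := Matrix.toLinearMap₂' ℚ G
  have key : ∀ u w : M, Bq (φ u) (φ w) = ((B u w : ℤ) : ℚ) := by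
    intro u w
    rw [show Bq = Matrix.toLinearMap₂' ℚ G from rfl, Matrix.toLinearMap₂'_apply,
      ← LinearMap.sum_repr_mul_repr_mul b b u w,
      Finsupp.sum_fintype _ _ (by intro i; simp)]
    push_cast
    refine Finset.sum_congr rfl fun i _ => ?_
    rw [Finsupp.sum_fintype _ _ (by intro j; simp)]
    refine Finset.sum_congr rfl fun j _ => ?_
    rw [hφapp, hφapp]
    show ((b.repr u i : ℤ) : ℚ) • ((b.repr w j : ℤ) : ℚ) • G i j = _
    simp only [smul_eq_mul, G, Matrix.of_apply]
    push_cast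
    ring
  have hsymmq : ∀ v w, Bq v w = Bq w v := by
    intro v w
    rw [show Bq = Matrix.toLinearMap₂' ℚ G from rfl, Matrix.toLinearMap₂'_apply,
      Matrix.toLinearMap₂'_apply, Finset.sum_comm]
    refine Finset.sum_congr rfl fun j _ => Finset.sum_congr rfl fun i _ => ?_
    have hG : G i j = G j i := by
      simp only [G, Matrix.of_apply]
      exact_mod_cast congrArg (fun z : ℤ => (z : ℚ)) (hBsymm (b i) (b j))
    rw [hG, smul_comm]
  have hrefl : Bq.IsRefl := fun v w h => by rw [hsymmq]; exact h
  have hnd : Bq.Nondegenerate := by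
    suffices hsl : LinearMap.SeparatingLeft Bq from
      And.intro hsl (fun v hv => hsl v (fun y => by rw [hsymmq]; exact hv y))
    intro v hv
    obtain ⟨c, hc, u, hu⟩ := clear_denom v
    have hu0 : u = 0 := by
      apply hBnd
      intro y
      have h1 : Bq (φ u) (φ y) = 0 := by
        rw [hu, map_smul, LinearMap.smul_apply, hv (φ y), smul_zero]
      rw [key] at h1
      exact_mod_cast h1
    rw [hu0, map_zero] at hu
    have : v = 0 := by
      rcases smul_eq_zero.mp hu.symm with h | h
      · exact absurd (by exact_mod_cast h : (c : ℚ) = 0) (by exact_mod_cast hc)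
      · exact h
    exact this
  -- hard direction
  have hard : coinvariants B A ≤ primClosure T := by
    intro x hx
    set Wq : Submodule ℚ (ι → ℚ) := Submodule.span ℚ (φ '' (T : Set M)) with hWq
    have hmem : φ x ∈ Bq.orthogonal (Bq.orthogonal Wq) := by
      rw [LinearMap.BilinForm.mem_orthogonal_iff]
      intro w hw
      obtain ⟨c, hc, u, hu⟩ := clear_denom w
      have hut : ∀ t ∈ T, B u t = 0 := by
        intro t ht
        have h2 : Bq w (φ t) = 0 := by
          rw [hsymmq]
          exact hw (φ t) (Submodule.subset_span ⟨t, ht, rfl⟩)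
        have h1 : Bq (φ u) (φ t) = 0 := by
          rw [hu, map_smul, LinearMap.smul_apply, h2, smul_zero]
        rw [key] at h1
        exact_mod_cast h1
      have hfix : ∀ i, g i u = u := by
        intro i
        have hco : ∀ y : M, (y - g i y) ∈ coinvariants B (Subgroup.zpowers (g i)) := by
          intro y v hv
          have hgv : g i v = v := hv (g i) (Subgroup.mem_zpowers _)
          have : B (g i y) v = B y v := by
            conv_lhs => rw [← hgv]
            exact hg i y v
          rw [map_sub, LinearMap.sub_apply, this, sub_self]
        have hdiff : ∀ y : M, B u y - B ((g i).symm u) y = 0 := by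
          intro y
          have h3 : B u (y - g i y) = 0 :=
            hut _ (le_iSup (fun i => coinvariants B (Subgroup.zpowers (g i))) i (hco y))
          have h4 : B u (g i y) = B ((g i).symm u) y := by
            conv_lhs => rw [← (g i).apply_symm_apply u]
            exact hg i _ y
          rw [map_sub, h4] at h3
          linarith [h3]
        have h5 : u - (g i).symm u = 0 := by
          apply hBnd
          intro y
          rw [map_sub, LinearMap.sub_apply]
          exact hdiff y
        have h6 : u = (g i).symm u := by
          have := sub_eq_zero.mp h5
          exact this
        conv_lhs => rw [h6]
        exact (g i).apply_symm_apply u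
      have hinv : u ∈ invariants A := by
        intro h hh
        refine Subgroup.closure_induction (fun a ha => ?_) rfl
          (fun a b' _ _ pa pb => ?_) (fun a _ pa => ?_) hh
        · obtain ⟨i, rfl⟩ := ha
          exact hfix i
        · show (a * b') u = u
          calc (a * b') u = a (b' u) := rfl
            _ = a u := by rw [pb]
            _ = u := pa
        · show a⁻¹ u = u
          calc (a⁻¹ : M ≃ₗ[ℤ] M) u = a.symm u := rfl
            _ = a.symm (a u) := by rw [pa]
            _ = u := a.symm_apply_apply u
      have hBxu : B x u = 0 := hx u hinv
      have h7 : (c : ℚ) * Bq w (φ x) = 0 := by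
        have : Bq (φ u) (φ x) = 0 := by
          rw [key]
          rw [hBsymm u x, hBxu]
          norm_num
        rw [hu, map_smul, LinearMap.smul_apply, smul_eq_mul] at this
        exact this
      have hcq : (c : ℚ) ≠ 0 := by exact_mod_cast hc
      exact (mul_eq_zero.mp h7).resolve_left hcq
    rw [LinearMap.BilinForm.orthogonal_orthogonal hnd hrefl] at hmem
    obtain ⟨n, f, gs, hsum⟩ := Submodule.mem_span_set'.mp hmem
    obtain ⟨d, hd⟩ := IsLocalization.exist_integer_multiples (nonZeroDivisors ℤ) Finset.univ f
    choose m hm using fun i => hd i (Finset.mem_univ i)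
    choose t ht hφt using fun i : Fin n => (gs i).2
    refine ⟨(d : ℤ), nonZeroDivisors.coe_ne_zero d, ?_⟩
    have heq : φ ((d : ℤ) • x) = φ (∑ i, m i • t i) := by
      rw [map_smul, map_sum]
      simp_rw [map_smul]
      have hdx : (d : ℤ) • φ x = ((d : ℤ) : ℚ) • φ x := (Int.cast_smul_eq_zsmul ℚ _ _).symm
      rw [hdx, ← hsum, Finset.smul_sum]
      refine Finset.sum_congr rfl fun i _ => ?_
      rw [hφt i, smul_smul]
      have hmi : ((m i : ℤ) : ℚ) = ((d : ℤ) : ℚ) * f i := by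
        have h := hm i
        rw [eq_intCast (algebraMap ℤ ℚ) (m i)] at h
        rw [h, ← Int.cast_smul_eq_zsmul ℚ ((d : ℤ)) (f i), smul_eq_mul]
      rw [← Int.cast_smul_eq_zsmul ℚ (m i), hmi]
    have hx' : (d : ℤ) • x = ∑ i, m i • t i := hφinj heq
    rw [hx']
    exact T.sum_mem fun i _ => T.smul_mem _ (ht i)
  exact le_antisymm hard (by
    rintro x ⟨c, hc, hcx⟩ v hv
    have h0 : B (c • x) v = 0 := hTle hcx v hv
    rw [map_smul, LinearMap.smul_apply, smul_eq_mul] at h0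
    exact (mul_eq_zero.mp h0).resolve_left hc)
end

section
/- Let N be a lattice of rank n with bilinear form B, and let A be a subgroup of its isometry group O(N). Suppose e₁, …, eₙ ∈ N form a basis of N ⊗ ℚ and that A permutes the set {e₁, …, eₙ}. Let e₁*, …, eₙ* ∈ N ⊗ ℚ be the dual basis with respect to B, i.e., B(eᵢ*, eⱼ) = δᵢⱼ. Let {e_{i₁₁}, …, e_{i₁ℓ₁}}, …, {e_{iₜ₁}, …, e_{iₜℓₜ}} be the orbits of A on {e₁, …, eₙ}, t being the number of orbits. Then the n − t vectors e_{i_{j1}}* − e_{i_{j2}}*, …, e_{i_{j(ℓⱼ−1)}}* − e_{i_{jℓⱼ}}* (for j = 1, …, t) form a basis of N_A ⊗ ℚ, where N_A = (N^A)^⊥ is the coinvariant sublattice. In particular, rk N_A = n − t. -/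
/-!
STATEMENT 10 (a rational basis of the coinvariant sublattice from the orbits of a
permuted basis).

A lattice of rank `n` is formalized by its Gram matrix `G : Matrix (Fin n) (Fin n) ℤ`
(symmetric, nonzero determinant) with bilinear form `bilin G x y = x ⬝ᵥ G.mulVec y` on
`N = (Fin n → ℤ)`; `N ⊗ ℚ` is `Fin n → ℚ` with the `ℚ`-bilinear extension `bilinQ G`.
A subgroup of the isometry group `O(N)` is a subgroup `A` of the automorphism group of
`N` all of whose elements preserve the form.

The vectors `e 1, …, e n ∈ N` form a basis of `N ⊗ ℚ` which is permuted by `A`; the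
orbits of `A` on `{e 1, …, e n}` are enumerated by `σ : (Σ j : Fin t, Fin (d j + 1)) ≃ Fin n`
(the `j`-th orbit is `{e (σ ⟨j, 0⟩), …, e (σ ⟨j, d j⟩)}`, `t` is the number of orbits);
`f 1, …, f n ∈ N ⊗ ℚ` is the dual basis (`B(f i, e j) = δᵢⱼ`).
-/

open Matrix

/-- The bilinear form of the lattice with Gram matrix `G`. -/
def bilin {n : ℕ} (G : Matrix (Fin n) (Fin n) ℤ) (x y : Fin n → ℤ) : ℤ :=
  x ⬝ᵥ G.mulVec y

/-- The `ℚ`-bilinear extension of the form of `G` to `N ⊗ ℚ = (Fin n → ℚ)`. -/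
def bilinQ {n : ℕ} (G : Matrix (Fin n) (Fin n) ℤ) (x y : Fin n → ℚ) : ℚ :=
  x ⬝ᵥ (G.map (Int.cast : ℤ → ℚ)).mulVec y

/-- The canonical inclusion `N = ℤⁿ ⊆ N ⊗ ℚ = ℚⁿ`. -/
def castVec {n : ℕ} (v : Fin n → ℤ) : Fin n → ℚ :=
  fun i => (v i : ℚ)

/-- The coinvariant sublattice `N_A = (N^A)^⊥`. -/
def coinv {n : ℕ} (G : Matrix (Fin n) (Fin n) ℤ)
    (A : Subgroup ((Fin n → ℤ) ≃ₗ[ℤ] (Fin n → ℤ))) : Submodule ℤ (Fin n → ℤ) where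
  carrier := {x | ∀ v : Fin n → ℤ, (∀ g ∈ A, g v = v) → bilin G x v = 0}
  add_mem' := by
    intro a b ha hb v hv
    have h1 := ha v hv
    have h2 := hb v hv
    simp only [bilin, add_dotProduct] at *
    omega
  zero_mem' := by
    intro v hv
    simp [bilin]
  smul_mem' := by
    intro c x hx v hv
    have h := hx v hv
    simp only [bilin, smul_dotProduct, smul_eq_mul] at *
    rw [h, mul_zero]

/-- The family of differences `e*_{i_{j,k}} − e*_{i_{j,k+1}}` of consecutive dual basis
vectors within each orbit. -/
def diffFam {n t : ℕ} (f : Fin n → (Fin n → ℚ)) (d : Fin t → ℕ)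
    (σ : (Σ j : Fin t, Fin (d j + 1)) ≃ Fin n) :
    (Σ j : Fin t, Fin (d j)) → (Fin n → ℚ) :=
  fun p => f (σ ⟨p.1, p.2.castSucc⟩) - f (σ ⟨p.1, p.2.succ⟩)

namespace St10

variable {n t : ℕ}

/-- `bilinQ` as a linear functional in the first argument. -/
def bilinR (G : Matrix (Fin n) (Fin n) ℤ) (y : Fin n → ℚ) : (Fin n → ℚ) →ₗ[ℚ] ℚ where
  toFun x := bilinQ G x y
  map_add' a b := by simp [bilinQ, add_dotProduct]
  map_smul' c a := by simp [bilinQ, smul_dotProduct]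

/-- `bilinQ` as a linear functional in the second argument. -/
def bilinL (G : Matrix (Fin n) (Fin n) ℤ) (x : Fin n → ℚ) : (Fin n → ℚ) →ₗ[ℚ] ℚ where
  toFun y := bilinQ G x y
  map_add' a b := by simp [bilinQ, mulVec_add, dotProduct_add]
  map_smul' c a := by simp [bilinQ, mulVec_smul, dotProduct_smul]

@[simp] lemma bilinR_apply (G : Matrix (Fin n) (Fin n) ℤ) (y x : Fin n → ℚ) :
    bilinR G y x = bilinQ G x y := rfl

@[simp] lemma bilinL_apply (G : Matrix (Fin n) (Fin n) ℤ) (x y : Fin n → ℚ) :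
    bilinL G x y = bilinQ G x y := rfl

/-- `castVec` as a `ℤ`-linear map. -/
def castLin : (Fin n → ℤ) →ₗ[ℤ] (Fin n → ℚ) where
  toFun := castVec
  map_add' a b := by funext i; simp [castVec]
  map_smul' c a := by funext i; simp [castVec]

@[simp] lemma castLin_apply (v : Fin n → ℤ) : (castLin v : Fin n → ℚ) = castVec v := rfl

lemma castVec_injective : Function.Injective (castVec (n := n)) := by
  intro a b h
  funext i
  have := congrFun h i
  simpa [castVec] using this

lemma bilinQ_cast (G : Matrix (Fin n) (Fin n) ℤ) (x y : Fin n → ℤ) :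
    bilinQ G (castVec x) (castVec y) = (bilin G x y : ℚ) := by
  simp [bilinQ, bilin, castVec, dotProduct, mulVec, Matrix.map_apply]

lemma castVec_mulVec (M : Matrix (Fin n) (Fin n) ℤ) (w : Fin n → ℤ) :
    castVec (M.mulVec w) = (M.map (Int.cast : ℤ → ℚ)).mulVec (castVec w) := by
  funext i
  simp [castVec, mulVec, dotProduct]

lemma g_cast (g : (Fin n → ℤ) ≃ₗ[ℤ] (Fin n → ℤ)) (w : Fin n → ℤ) :
    castVec (g w) =
      ((LinearMap.toMatrix' (g : (Fin n → ℤ) →ₗ[ℤ] (Fin n → ℤ))).map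
        (Int.cast : ℤ → ℚ)).mulVec (castVec w) := by
  rw [← castVec_mulVec, ← Matrix.toLin'_apply, Matrix.toLin'_toMatrix']
  rfl

/-- indicator sum over one orbit -/
lemma sum_indicator {d : Fin t → ℕ} (p : Σ j : Fin t, Fin (d j + 1)) (j : Fin t) :
    (∑ k : Fin (d j + 1), if p = ⟨j, k⟩ then (1 : ℚ) else 0)
      = if p.1 = j then 1 else 0 := by
  obtain ⟨a, b⟩ := p
  by_cases h : a = j
  · subst h
    simp only [Sigma.mk.inj_iff, heq_eq_eq, true_and]
    simp
  · simp only [Sigma.mk.inj_iff]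
    simp [h]

/-- truncated indicator sum over one orbit -/
lemma sum_indicator_le {d : Fin t → ℕ} (p : Σ j : Fin t, Fin (d j + 1)) (q : Σ j : Fin t, Fin (d j)) :
    (∑ k : Fin (d q.1 + 1), if k ≤ q.2.castSucc then (if p = ⟨q.1, k⟩ then (1 : ℚ) else 0) else 0)
      = if h : p.1 = q.1 then (if (p.2.val ≤ q.2.val) then 1 else 0) else 0 := by
  obtain ⟨a, b⟩ := p
  obtain ⟨c, k0⟩ := q
  by_cases h : a = c
  · subst h
    simp only [dif_pos rfl]
    simp only [Sigma.mk.inj_iff, heq_eq_eq, true_and]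
    rw [Finset.sum_eq_single b]
    · simp [Fin.le_def]
    · intro k _ hk
      simp [Ne.symm hk]
    · simp
  · simp only [Sigma.mk.inj_iff, h, false_and, if_false, dif_neg h]
    simp

end St10

set_option maxHeartbeats 1000000 in
/-- Let `N` be a lattice of rank `n`, `A ≤ O(N)`, and suppose
`e 1, …, e n ∈ N` form a basis of `N ⊗ ℚ` permuted by `A`, with dual basis
`e* = f : Fin n → N ⊗ ℚ` (`B(f i, e j) = δᵢⱼ`).  Enumerate the orbits of `A` on
`{e 1, …, e n}` by `σ` as above, with `t` orbits of sizes `d j + 1`.  Then the `n − t`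
differences of consecutive dual vectors within the orbits form a basis of `N_A ⊗ ℚ`;
in particular `rk N_A = n − t`. -/
theorem statement10 {n t : ℕ} (G : Matrix (Fin n) (Fin n) ℤ)
    (hsymm : G.IsSymm) (hnd : G.det ≠ 0)
    (A : Subgroup ((Fin n → ℤ) ≃ₗ[ℤ] (Fin n → ℤ)))
    (hA : ∀ g ∈ A, ∀ x y : Fin n → ℤ, bilin G (g x) (g y) = bilin G x y)
    (e : Fin n → (Fin n → ℤ))
    (heIndep : LinearIndependent ℚ fun i => castVec (e i))
    (heSpan : Submodule.span ℚ (Set.range fun i => castVec (e i)) = ⊤)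
    (hperm : ∀ g ∈ A, ∀ i : Fin n, ∃ j : Fin n, g (e i) = e j)
    (f : Fin n → (Fin n → ℚ))
    (hdual : ∀ i j : Fin n, bilinQ G (f i) (castVec (e j)) = if i = j then 1 else 0)
    (d : Fin t → ℕ) (σ : (Σ j : Fin t, Fin (d j + 1)) ≃ Fin n)
    (horb : ∀ (j j' : Fin t) (k : Fin (d j + 1)) (k' : Fin (d j' + 1)),
      (∃ g ∈ A, g (e (σ ⟨j, k⟩)) = e (σ ⟨j', k'⟩)) ↔ j = j') :
    LinearIndependent ℚ (diffFam f d σ) ∧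
    Submodule.span ℚ (Set.range (diffFam f d σ))
      = Submodule.span ℚ (castVec '' (coinv G A : Set (Fin n → ℤ))) ∧
    Module.finrank ℤ (coinv G A) = n - t := by
  classical
  -- orbit sums
  set s : Fin t → (Fin n → ℤ) := fun j => ∑ k : Fin (d j + 1), e (σ ⟨j, k⟩) with hs
  set sQ : Fin t → (Fin n → ℚ) := fun j => castVec (s j) with hsQdef
  have hsQ : ∀ j, sQ j = ∑ k : Fin (d j + 1), castVec (e (σ ⟨j, k⟩)) := by
    intro j
    funext i
    simp [sQ, s, castVec, Finset.sum_apply]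
  have einj : Function.Injective e := by
    intro i j h
    exact heIndep.injective (congrArg castVec h)
  -- pairing of f with orbit sums
  have hfs : ∀ (i : Fin n) (j : Fin t),
      bilinQ G (f i) (sQ j) = if (σ.symm i).1 = j then 1 else 0 := by
    intro i j
    have h1 : bilinQ G (f i) (sQ j)
        = ∑ k : Fin (d j + 1), bilinQ G (f i) (castVec (e (σ ⟨j, k⟩))) := by
      rw [hsQ]
      exact map_sum (St10.bilinL G (f i)) _ _
    have h2 : ∀ k : Fin (d j + 1), bilinQ G (f i) (castVec (e (σ ⟨j, k⟩)))
        = if σ.symm i = ⟨j, k⟩ then (1:ℚ) else 0 := by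
      intro k
      rw [hdual]
      simp [Equiv.symm_apply_eq]
    rw [h1]
    simp_rw [h2]
    exact St10.sum_indicator (σ.symm i) j
  -- the linear map Φ with kernel W = N_A ⊗ ℚ
  set Φ : (Fin n → ℚ) →ₗ[ℚ] (Fin t → ℚ) :=
    LinearMap.pi (fun j => St10.bilinR G (sQ j)) with hΦdef
  have hΦ_apply : ∀ x j, Φ x j = bilinQ G x (sQ j) := fun x j => rfl
  have hΦsurj : Function.Surjective Φ := by
    intro w
    refine ⟨∑ j : Fin t, w j • f (σ ⟨j, 0⟩), ?_⟩
    rw [map_sum]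
    funext j'
    rw [Finset.sum_apply]
    have : ∀ j : Fin t, (Φ (w j • f (σ ⟨j, 0⟩))) j' = if j = j' then w j else 0 := by
      intro j
      rw [_root_.map_smul]
      have := hfs (σ ⟨j, 0⟩) j'
      rw [Equiv.symm_apply_apply] at this
      simp only [Pi.smul_apply, hΦ_apply, this, smul_eq_mul]
      split <;> simp
    simp_rw [this]
    simp
  have hranktop : LinearMap.range Φ = ⊤ := LinearMap.range_eq_top.2 hΦsurj
  -- counting
  have hcard : Fintype.card (Σ j : Fin t, Fin (d j)) + t = n := by
    have h1 : Fintype.card (Σ j : Fin t, Fin (d j + 1)) = n := by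
      rw [Fintype.card_congr σ, Fintype.card_fin]
    rw [Fintype.card_sigma] at h1 ⊢
    simp only [Fintype.card_fin] at h1 ⊢
    rw [Finset.sum_add_distrib] at h1
    simpa using h1
  have hfinW : Module.finrank ℚ (LinearMap.ker Φ) = n - t := by
    have h := LinearMap.finrank_range_add_finrank_ker Φ
    rw [hranktop, finrank_top] at h
    simp only [Module.finrank_fin_fun] at h
    omega
  -- the dual family u for the differences
  set u : (Σ j : Fin t, Fin (d j)) → (Fin n → ℚ) := fun q =>
    ∑ k : Fin (d q.1 + 1), if k ≤ q.2.castSucc then castVec (e (σ ⟨q.1, k⟩)) else 0 with hu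
  have hfu : ∀ (i : Fin n) (q : Σ j : Fin t, Fin (d j)), bilinQ G (f i) (u q)
      = if h : (σ.symm i).1 = q.1 then (if ((σ.symm i).2.val ≤ q.2.val) then (1:ℚ) else 0)
        else 0 := by
    intro i q
    have h1 : bilinQ G (f i) (u q) = ∑ k : Fin (d q.1 + 1),
        (if k ≤ q.2.castSucc then (if σ.symm i = ⟨q.1, k⟩ then (1:ℚ) else 0) else 0) := by
      have huq : u q = ∑ k : Fin (d q.1 + 1),
          (if k ≤ q.2.castSucc then castVec (e (σ ⟨q.1, k⟩)) else 0) := by rw [hu]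
      rw [huq, ← St10.bilinL_apply, map_sum]
      simp only [St10.bilinL_apply]
      apply Finset.sum_congr rfl
      intro k _
      split
      · rw [hdual]
        simp [Equiv.symm_apply_eq]
      · simp [bilinQ]
    rw [h1, St10.sum_indicator_le]
  have hpair : ∀ p q : (Σ j : Fin t, Fin (d j)),
      bilinQ G (diffFam f d σ p) (u q) = if p = q then 1 else 0 := by
    intro p q
    have hsub : bilinQ G (diffFam f d σ p) (u q)
        = bilinQ G (f (σ ⟨p.1, p.2.castSucc⟩)) (u q)
          - bilinQ G (f (σ ⟨p.1, p.2.succ⟩)) (u q) := by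
      simp [diffFam, bilinQ, sub_dotProduct]
    rw [hsub, hfu, hfu, Equiv.symm_apply_apply, Equiv.symm_apply_apply]
    obtain ⟨a, b⟩ := p
    obtain ⟨c, k⟩ := q
    by_cases h : a = c
    · subst h
      simp only [dif_pos rfl, Sigma.mk.inj_iff, heq_eq_eq, true_and, dite_true,
        Fin.coe_castSucc, Fin.val_succ]
      simp only [Fin.ext_iff]
      split_ifs <;> simp_all <;> omega
    · simp only [Sigma.mk.inj_iff, h, false_and, if_false, dif_neg h]
      simp
  -- linear independence of the differences
  have hLI : LinearIndependent ℚ (diffFam f d σ) := by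
    rw [Fintype.linearIndependent_iff]
    intro c hc q
    have h0 : (St10.bilinR G (u q)) (∑ p, c p • diffFam f d σ p) = 0 := by
      rw [hc]; exact map_zero _
    rw [map_sum] at h0
    simp only [_root_.map_smul, smul_eq_mul] at h0
    have h1 : ∀ p, (St10.bilinR G (u q)) (diffFam f d σ p)
        = if p = q then (1:ℚ) else 0 := fun p => hpair p q
    simp_rw [h1] at h0
    simpa [Finset.sum_ite_eq'] using h0
  -- differences lie in W
  have hdiffW : ∀ p, diffFam f d σ p ∈ LinearMap.ker Φ := by
    intro p
    rw [LinearMap.mem_ker]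
    funext j
    have hsub : Φ (diffFam f d σ p) j
        = bilinQ G (f (σ ⟨p.1, p.2.castSucc⟩)) (sQ j)
          - bilinQ G (f (σ ⟨p.1, p.2.succ⟩)) (sQ j) := by
      rw [hΦ_apply]
      simp [diffFam, bilinQ, sub_dotProduct]
    rw [hsub, hfs, hfs, Equiv.symm_apply_apply, Equiv.symm_apply_apply]
    simp
  -- orbit sums are invariant
  have hsinv : ∀ j : Fin t, ∀ g ∈ A, g (s j) = s j := by
    intro j g hg
    have hτ : ∀ k : Fin (d j + 1), ∃ k' : Fin (d j + 1),
        g (e (σ ⟨j, k⟩)) = e (σ ⟨j, k'⟩) := by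
      intro k
      obtain ⟨m, hm⟩ := hperm g hg (σ ⟨j, k⟩)
      obtain ⟨⟨j', k'⟩, hx⟩ : ∃ x, σ x = m := ⟨σ.symm m, σ.apply_symm_apply m⟩
      have hjj : j = j' := (horb j j' k k').1 ⟨g, hg, by rw [hx]; exact hm⟩
      subst hjj
      exact ⟨k', by rw [hm, hx]⟩
    choose τ hτ' using hτ
    have hτinj : Function.Injective τ := by
      intro a b h
      have h2 : g (e (σ ⟨j, a⟩)) = g (e (σ ⟨j, b⟩)) := by rw [hτ' a, hτ' b, h]
      have h5 := σ.injective (einj (g.injective h2))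
      simpa using (Sigma.mk.inj_iff.1 h5).2
    have hτbij := Finite.injective_iff_bijective.1 hτinj
    have hgsum : g (s j) = ∑ k, g (e (σ ⟨j, k⟩)) := by
      rw [hs]
      exact map_sum (g : (Fin n → ℤ) →ₗ[ℤ] (Fin n → ℤ)) _ _
    rw [hgsum, hs]
    calc (∑ k, g (e (σ ⟨j, k⟩))) = ∑ k, e (σ ⟨j, τ k⟩) := by simp_rw [hτ']
      _ = ∑ k, e (σ ⟨j, k⟩) :=
        Fintype.sum_bijective τ hτbij _ _ (fun k => rfl)
  -- coinvariants lie in W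
  have hCW : Submodule.span ℚ (castVec '' (coinv G A : Set (Fin n → ℤ)))
      ≤ LinearMap.ker Φ := by
    rw [Submodule.span_le]
    rintro _ ⟨x, hx, rfl⟩
    rw [SetLike.mem_coe, LinearMap.mem_ker]
    funext j
    have h0 : bilin G x (s j) = 0 := hx (s j) (fun g hg => hsinv j g hg)
    rw [hΦ_apply, hsQdef]
    rw [St10.bilinQ_cast, h0, Int.cast_zero]
    rfl
  -- invariant integral vectors are spanned by the orbit sums
  obtain ⟨bE, hbE⟩ : ∃ b : Module.Basis (Fin n) ℚ (Fin n → ℚ), ∀ i, b i = castVec (e i) :=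
    ⟨Module.Basis.mk heIndep (by rw [heSpan]), fun i => Module.Basis.mk_apply _ _ i⟩
  have hinv_span : ∀ v : Fin n → ℤ, (∀ g ∈ A, g v = v) →
      castVec v ∈ Submodule.span ℚ (Set.range sQ) := by
    intro v hv
    set c : Fin n → ℚ := fun i => bE.repr (castVec v) i with hcdef
    have hvrepr : castVec v = ∑ i, c i • castVec (e i) := by
      calc castVec v = ∑ i, bE.repr (castVec v) i • bE i := (bE.sum_repr (castVec v)).symm
        _ = ∑ i, c i • castVec (e i) := by
          apply Finset.sum_congr rfl
          intro i _
          rw [hbE]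
    have hconst : ∀ (i i' : Fin n), (∃ g ∈ A, g (e i) = e i') → c i' = c i := by
      rintro i i' ⟨g, hg, hgi⟩
      choose π hπ' using hperm g hg
      have hπinj : Function.Injective π := fun a b h =>
        einj (g.injective (by rw [hπ' a, hπ' b, h]))
      have hπbij := Finite.injective_iff_bijective.1 hπinj
      set πe : Fin n ≃ Fin n := Equiv.ofBijective π hπbij with hπe
      set M := LinearMap.toMatrix' (g : (Fin n → ℤ) →ₗ[ℤ] (Fin n → ℤ)) with hM
      set gQ : (Fin n → ℚ) →ₗ[ℚ] (Fin n → ℚ) :=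
        Matrix.mulVecLin (M.map (Int.cast : ℤ → ℚ)) with hgQdef
      have hgQ : ∀ w : Fin n → ℤ, gQ (castVec w) = castVec (g w) := by
        intro w
        simpa [hgQdef, Matrix.mulVecLin_apply, hM] using (St10.g_cast g w).symm
      have hfix : gQ (castVec v) = castVec v := by rw [hgQ, hv g hg]
      have h1 : castVec v = ∑ i, c i • castVec (e (π i)) := by
        conv_lhs => rw [← hfix, hvrepr]
        rw [map_sum]
        apply Finset.sum_congr rfl
        intro i _
        rw [_root_.map_smul, hgQ, hπ' i]
      have h2 : (∑ i, c i • castVec (e (π i))) = ∑ i, c (πe.symm i) • castVec (e i) := by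
        rw [← Equiv.sum_comp πe (fun i => c (πe.symm i) • castVec (e i))]
        apply Finset.sum_congr rfl
        intro i _
        rw [Equiv.symm_apply_apply]
        rfl
      have hz : ∑ i, (c (πe.symm i) - c i) • castVec (e i) = 0 := by
        simp only [sub_smul]
        rw [Finset.sum_sub_distrib, ← h2, ← h1, ← hvrepr, sub_self]
      have h3 : ∀ i, c (πe.symm i) - c i = 0 :=
        Fintype.linearIndependent_iff.1 heIndep _ hz
      have hπi : π i = i' := einj ((hπ' i).symm.trans hgi)
      have h4 := h3 (πe i)
      rw [Equiv.symm_apply_apply] at h4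
      have h5 : c (πe i) = c i := by linarith
      calc c i' = c (π i) := by rw [hπi]
        _ = c i := h5
    have horbc : ∀ (j : Fin t) (k : Fin (d j + 1)), c (σ ⟨j, k⟩) = c (σ ⟨j, 0⟩) :=
      fun j k => hconst _ _ ((horb j j 0 k).2 rfl)
    have hfin : castVec v = ∑ j : Fin t, c (σ ⟨j, 0⟩) • sQ j := by
      calc castVec v
          = ∑ x : (Σ j : Fin t, Fin (d j + 1)), c (σ x) • castVec (e (σ x)) := by
            rw [hvrepr, ← Equiv.sum_comp σ (fun i => c i • castVec (e i))]
        _ = ∑ j : Fin t, ∑ k : Fin (d j + 1), c (σ ⟨j, k⟩) • castVec (e (σ ⟨j, k⟩)) := by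
            rw [← Finset.univ_sigma_univ, Finset.sum_sigma]
        _ = ∑ j : Fin t, c (σ ⟨j, 0⟩) • sQ j := by
            apply Finset.sum_congr rfl
            intro j _
            rw [hsQ j, Finset.smul_sum]
            apply Finset.sum_congr rfl
            intro k _
            rw [horbc j k]
    rw [hfin]
    exact Submodule.sum_mem _ (fun j _ =>
      Submodule.smul_mem _ _ (Submodule.subset_span ⟨j, rfl⟩))
  -- W is contained in the span of the coinvariants
  have hWC : LinearMap.ker Φ
      ≤ Submodule.span ℚ (castVec '' (coinv G A : Set (Fin n → ℤ))) := by
    intro x hx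
    obtain ⟨b, hb⟩ := IsLocalization.exist_integer_multiples
      (nonZeroDivisors ℤ) Finset.univ x
    choose z hz using fun i => hb i (Finset.mem_univ i)
    have hbz : ((b : ℤ) : ℚ) ≠ 0 := by
      exact_mod_cast nonZeroDivisors.coe_ne_zero b
    have hcast : castVec z = ((b : ℤ) : ℚ) • x := by
      funext i
      have := hz i
      simpa [castVec, Algebra.smul_def] using this
    have hxker : ∀ y ∈ Submodule.span ℚ (Set.range sQ), bilinQ G x y = 0 := by
      intro y hy
      have hle : Submodule.span ℚ (Set.range sQ) ≤ LinearMap.ker (St10.bilinL G x) := by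
        rw [Submodule.span_le]
        rintro _ ⟨j, rfl⟩
        rw [SetLike.mem_coe, LinearMap.mem_ker]
        have := congrFun (LinearMap.mem_ker.1 hx) j
        rw [hΦ_apply] at this
        exact this
      exact hle hy
    have hzco : z ∈ coinv G A := by
      intro v hv
      have h1 : (bilin G z v : ℚ) = 0 := by
        rw [← St10.bilinQ_cast, hcast]
        have h2 := hxker (castVec v) (hinv_span v hv)
        simp only [bilinQ, smul_dotProduct, smul_eq_mul] at h2 ⊢
        rw [h2, mul_zero]
      exact_mod_cast h1
    have hmem : castVec z ∈ Submodule.span ℚ (castVec '' (coinv G A : Set (Fin n → ℤ))) :=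
      Submodule.subset_span ⟨z, hzco, rfl⟩
    have hxz : x = (((b : ℤ) : ℚ))⁻¹ • castVec z := by
      rw [hcast, smul_smul, inv_mul_cancel₀ hbz, one_smul]
    rw [hxz]
    exact Submodule.smul_mem _ _ hmem
  -- span equalities
  have hSW : Submodule.span ℚ (Set.range (diffFam f d σ)) = LinearMap.ker Φ := by
    apply Submodule.eq_of_le_of_finrank_le
    · rw [Submodule.span_le]
      rintro _ ⟨p, rfl⟩
      exact hdiffW p
    · rw [hfinW, finrank_span_eq_card hLI]
      omega
  have hCWeq : Submodule.span ℚ (castVec '' (coinv G A : Set (Fin n → ℤ)))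
      = LinearMap.ker Φ := le_antisymm hCW hWC
  refine ⟨hLI, by rw [hSW, hCWeq], ?_⟩
  -- rank computation over ℤ
  obtain ⟨m, bb⟩ := Submodule.basisOfPid (Pi.basisFun ℤ (Fin n)) (coinv G A)
  have hm : Module.finrank ℤ (coinv G A) = m := by
    rw [Module.finrank_eq_card_basis bb, Fintype.card_fin]
  set vb : Fin m → (Fin n → ℚ) := fun i => castVec ((bb i : Fin n → ℤ)) with hvb
  have hvbZ : LinearIndependent ℤ vb := by
    have h1 : LinearIndependent ℤ (fun i => ((bb i : Fin n → ℤ))) :=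
      bb.linearIndependent.map' (coinv G A).subtype (Submodule.ker_subtype _)
    exact h1.map' St10.castLin (by
      rw [LinearMap.ker_eq_bot]
      exact St10.castVec_injective)
  have hvbQ : LinearIndependent ℚ vb := (LinearIndependent.iff_fractionRing ℤ ℚ).1 hvbZ
  have hspanvb : Submodule.span ℚ (Set.range vb)
      = Submodule.span ℚ (castVec '' (coinv G A : Set (Fin n → ℤ))) := by
    apply le_antisymm
    · rw [Submodule.span_le]
      rintro _ ⟨i, rfl⟩
      exact Submodule.subset_span ⟨bb i, (bb i).2, rfl⟩
    · rw [Submodule.span_le]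
      rintro _ ⟨x, hx, rfl⟩
      have hxsum : (⟨x, hx⟩ : coinv G A) = ∑ i, bb.repr ⟨x, hx⟩ i • bb i :=
        (bb.sum_repr ⟨x, hx⟩).symm
      have hxv : x = ∑ i, bb.repr ⟨x, hx⟩ i • (bb i : Fin n → ℤ) := by
        have := congrArg (Subtype.val) hxsum
        rw [Submodule.coe_sum] at this
        simpa only [Submodule.coe_smul] using this
      have hcv : castVec x = ∑ i, ((bb.repr ⟨x, hx⟩ i : ℚ)) • vb i := by
        conv_lhs => rw [hxv, ← St10.castLin_apply, map_sum]
        apply Finset.sum_congr rfl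
        intro i _
        rw [LinearMap.map_smul, ← Int.cast_smul_eq_zsmul ℚ]
        rfl
      rw [SetLike.mem_coe, hcv]
      exact Submodule.sum_mem _ (fun i _ =>
        Submodule.smul_mem _ _ (Submodule.subset_span ⟨i, rfl⟩))
  have hfrk : Module.finrank ℚ (Submodule.span ℚ (Set.range vb)) = m := by
    rw [finrank_span_eq_card hvbQ, Fintype.card_fin]
  rw [hspanvb, hCWeq, hfinW] at hfrk
  omega
end
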